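/- Let (a,b,c,d) ∈ ℤ⁴ satisfy Q(a,b,c,d) = 0, and let f_a(x,y) = (a+b)x² + (a+b+d−c)xy + (a+d)y². Then for every pair of coprime integers (x,y), there exists an element γ of the subgroup A₁ of GL₄(ℤ) generated by S₂, S₃, S₄ such that the vector γ·(a,b,c,d)ᵀ has first coordinate equal to a and has some coordinate i ∈ {2,3,4} equal to f_a(x,y) − a. (Hence every integer of the form f_a(x,y) − a with gcd(x,y) = 1 occurs as a curvature of a circle tangent to the fixed circle of curvature a in the packing.) -/

import Mathlib

open Matrix

/-- The Descartes quadratic form `Q(a,b,c,d) = 2(a²+b²+c²+d²) - (a+b+c+d)²`. -/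
def descartesQ (a b c d : ℤ) : ℤ :=
  2 * (a ^ 2 + b ^ 2 + c ^ 2 + d ^ 2) - (a + b + c + d) ^ 2

def apS2 : Matrix (Fin 4) (Fin 4) ℤ := !![1,0,0,0; 2,-1,2,2; 0,0,1,0; 0,0,0,1]
def apS3 : Matrix (Fin 4) (Fin 4) ℤ := !![1,0,0,0; 0,1,0,0; 2,2,-1,2; 0,0,0,1]
def apS4 : Matrix (Fin 4) (Fin 4) ℤ := !![1,0,0,0; 0,1,0,0; 0,0,1,0; 2,2,2,-1]

/-- The subgroup `A₁` of the Apollonian group, generated by the involutions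
`S₂, S₃, S₄` (it fixes the first coordinate). Since each generator is an
involution, the submonoid they generate coincides (as a set of matrices) with
the group they generate. -/
def apolloA1 : Submonoid (Matrix (Fin 4) (Fin 4) ℤ) :=
  Submonoid.closure {apS2, apS3, apS4}

namespace ApolloAux

def g (a b c d x y : ℤ) : ℤ :=
  ((a + b) * x ^ 2 + (a + b + d - c) * x * y + (a + d) * y ^ 2) - a

def Reach (a b c d u1 u2 v1 v2 : ℤ) : Prop :=
  ∃ M ∈ apolloA1,
    M.mulVec ![a, b, c, d] =
      ![a, g a b c d u1 u2, g a b c d (u1 + v1) (u2 + v2), g a b c d v1 v2]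

lemma s2_mem : apS2 ∈ apolloA1 := Submonoid.subset_closure (Set.mem_insert _ _)
lemma s3_mem : apS3 ∈ apolloA1 :=
  Submonoid.subset_closure (Set.mem_insert_of_mem _ (Set.mem_insert _ _))
lemma s4_mem : apS4 ∈ apolloA1 :=
  Submonoid.subset_closure (Set.mem_insert_of_mem _ (Set.mem_insert_of_mem _ rfl))

lemma s2_mulVec (a p q r : ℤ) :
    apS2.mulVec ![a, p, q, r] = ![a, 2*a - p + 2*q + 2*r, q, r] := by
  funext i; fin_cases i <;>
    (simp [apS2, Matrix.mulVec, dotProduct, Fin.sum_univ_four]; try ring)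

lemma s3_mulVec (a p q r : ℤ) :
    apS3.mulVec ![a, p, q, r] = ![a, p, 2*a + 2*p - q + 2*r, r] := by
  funext i; fin_cases i <;>
    (simp [apS3, Matrix.mulVec, dotProduct, Fin.sum_univ_four]; try ring)

lemma s4_mulVec (a p q r : ℤ) :
    apS4.mulVec ![a, p, q, r] = ![a, p, q, 2*a + 2*p + 2*q - r] := by
  funext i; fin_cases i <;>
    (simp [apS4, Matrix.mulVec, dotProduct, Fin.sum_univ_four]; try ring)

lemma reach_base (a b c d : ℤ) : Reach a b c d 1 0 0 1 := by
  refine ⟨apS3, s3_mem, ?_⟩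
  rw [s3_mulVec]
  funext i; fin_cases i <;> (simp [g]; try ring)

lemma reach_s2 {a b c d u1 u2 v1 v2 : ℤ} (h : Reach a b c d u1 u2 v1 v2) :
    Reach a b c d (u1 + 2*v1) (u2 + 2*v2) (-v1) (-v2) := by
  obtain ⟨M, hM, hv⟩ := h
  refine ⟨apS2 * M, mul_mem s2_mem hM, ?_⟩
  rw [← Matrix.mulVec_mulVec, hv, s2_mulVec]
  funext i; fin_cases i <;> (simp [g]; try ring)

lemma reach_s3 {a b c d u1 u2 v1 v2 : ℤ} (h : Reach a b c d u1 u2 v1 v2) :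
    Reach a b c d u1 u2 (-v1) (-v2) := by
  obtain ⟨M, hM, hv⟩ := h
  refine ⟨apS3 * M, mul_mem s3_mem hM, ?_⟩
  rw [← Matrix.mulVec_mulVec, hv, s3_mulVec]
  funext i; fin_cases i <;> (simp [g]; try ring)

lemma reach_s4 {a b c d u1 u2 v1 v2 : ℤ} (h : Reach a b c d u1 u2 v1 v2) :
    Reach a b c d (-u1) (-u2) (2*u1 + v1) (2*u2 + v2) := by
  obtain ⟨M, hM, hv⟩ := h
  refine ⟨apS4 * M, mul_mem s4_mem hM, ?_⟩
  rw [← Matrix.mulVec_mulVec, hv, s4_mulVec]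
  funext i; fin_cases i <;> (simp [g]; try ring)

lemma reach_neg {a b c d u1 u2 v1 v2 : ℤ} (h : Reach a b c d u1 u2 v1 v2) :
    Reach a b c d (-u1) (-u2) (-v1) (-v2) := by
  obtain ⟨M, hM, hv⟩ := h
  refine ⟨M, hM, ?_⟩
  rw [hv]
  funext i; fin_cases i <;> (simp [g]; try ring)



lemma reach_of_eq {a b c d u1 u2 v1 v2 w1 w2 z1 z2 : ℤ}
    (h : Reach a b c d u1 u2 v1 v2)
    (e1 : w1 = u1) (e2 : w2 = u2) (e3 : z1 = v1) (e4 : z2 = v2) :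
    Reach a b c d w1 w2 z1 z2 := by
  rw [e1, e2, e3, e4]; exact h

lemma reach_nu {a b c d u1 u2 v1 v2 : ℤ} (h : Reach a b c d u1 u2 v1 v2) :
    Reach a b c d (-u1) (-u2) v1 v2 :=
  reach_of_eq (reach_neg (reach_s3 h)) rfl rfl (by ring) (by ring)

lemma reach_addu {a b c d u1 u2 v1 v2 : ℤ} (h : Reach a b c d u1 u2 v1 v2) :
    Reach a b c d (u1 + 2*v1) (u2 + 2*v2) v1 v2 :=
  reach_of_eq (reach_s3 (reach_s2 h)) rfl rfl (by ring) (by ring)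

lemma reach_subu {a b c d u1 u2 v1 v2 : ℤ} (h : Reach a b c d u1 u2 v1 v2) :
    Reach a b c d (u1 - 2*v1) (u2 - 2*v2) v1 v2 :=
  reach_of_eq (reach_s2 (reach_s3 h)) (by ring) (by ring) (by ring) (by ring)

lemma reach_addv {a b c d u1 u2 v1 v2 : ℤ} (h : Reach a b c d u1 u2 v1 v2) :
    Reach a b c d u1 u2 (v1 + 2*u1) (v2 + 2*u2) :=
  reach_of_eq (reach_s3 (reach_neg (reach_s4 h))) (by ring) (by ring) (by ring) (by ring)

lemma reach_subv {a b c d u1 u2 v1 v2 : ℤ} (h : Reach a b c d u1 u2 v1 v2) :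
    Reach a b c d u1 u2 (v1 - 2*u1) (v2 - 2*u2) :=
  reach_of_eq (reach_s3 (reach_addv (reach_s3 h))) (by ring) (by ring) (by ring) (by ring)

lemma reach_u_add {a b c d u1 u2 v1 v2 : ℤ} (h : Reach a b c d u1 u2 v1 v2) (k : ℤ) :
    Reach a b c d (u1 + 2*k*v1) (u2 + 2*k*v2) v1 v2 := by
  induction k using Int.induction_on with
  | zero => exact reach_of_eq h (by ring) (by ring) rfl rfl
  | succ n ih => exact reach_of_eq (reach_addu ih) (by push_cast; ring) (by push_cast; ring) rfl rfl
  | pred n ih => exact reach_of_eq (reach_subu ih) (by push_cast; ring) (by push_cast; ring) rfl rfl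

lemma reach_v_add {a b c d u1 u2 v1 v2 : ℤ} (h : Reach a b c d u1 u2 v1 v2) (k : ℤ) :
    Reach a b c d u1 u2 (v1 + 2*k*u1) (v2 + 2*k*u2) := by
  induction k using Int.induction_on with
  | zero => exact reach_of_eq h rfl rfl (by ring) (by ring)
  | succ n ih => exact reach_of_eq (reach_addv ih) rfl rfl (by push_cast; ring) (by push_cast; ring)
  | pred n ih => exact reach_of_eq (reach_subv ih) rfl rfl (by push_cast; ring) (by push_cast; ring)

lemma exists_reduce (x m : ℤ) (hm : m ≠ 0) :
    ∃ k : ℤ, (x + 2*k*m).natAbs ≤ m.natAbs := by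
  have main : ∀ m' : ℤ, 0 < m' → ∀ x' : ℤ, ∃ k : ℤ, (x' + 2*k*m').natAbs ≤ m'.natAbs := by
    intro m' hm' x'
    refine ⟨-((x' + m') / (2*m')), ?_⟩
    have h2m : (0:ℤ) < 2*m' := by omega
    have h1 : 0 ≤ (x' + m') % (2*m') := Int.emod_nonneg _ (by omega)
    have h2 : (x' + m') % (2*m') < 2*m' := Int.emod_lt_of_pos _ h2m
    have h4 : x' + 2*(-((x' + m') / (2*m')))*m' = (x' + m') % (2*m') - m' := by
      linear_combination -Int.emod_add_mul_ediv (x' + m') (2*m')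
    omega
  rcases lt_or_gt_of_ne hm with h | h
  · obtain ⟨k, hk⟩ := main (-m) (by omega) x
    refine ⟨-k, ?_⟩
    have he : x + 2*(-k)*m = x + 2*k*(-m) := by ring
    rw [he]; omega
  · exact main m h x



lemma reach_all_aux (a b c d : ℤ) : ∀ n : ℕ, ∀ u1 u2 v1 v2 : ℤ,
    u1.natAbs + v1.natAbs ≤ n →
    (u1 * v2 - u2 * v1 = 1 ∨ u1 * v2 - u2 * v1 = -1) →
    Odd u1 → Even u2 → Even v1 →
    Reach a b c d u1 u2 v1 v2 := by
  intro n
  induction n using Nat.strong_induction_on with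
  | _ n ih =>
    intro u1 u2 v1 v2 hn hdet hu1 hu2 hv1
    by_cases hv0 : v1 = 0
    · subst hv0
      obtain ⟨m, hm⟩ := hu2
      have hu : u1 = 1 ∨ u1 = -1 := by
        rcases hdet with h | h
        · have : u1 * v2 = 1 := by linarith
          rcases Int.eq_one_or_neg_one_of_mul_eq_one' this with ⟨h1, _⟩ | ⟨h1, _⟩
          · exact Or.inl h1
          · exact Or.inr h1
        · have : u1 * (-v2) = 1 := by linarith
          rcases Int.eq_one_or_neg_one_of_mul_eq_one' this with ⟨h1, _⟩ | ⟨h1, _⟩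
          · exact Or.inl h1
          · exact Or.inr h1
      have hv : v2 = 1 ∨ v2 = -1 := by
        rcases hdet with h | h
        · have : (-v2) * (-u1) = 1 := by linarith
          rcases Int.eq_one_or_neg_one_of_mul_eq_one' this with ⟨h1, _⟩ | ⟨h1, _⟩
          · exact Or.inr (by omega)
          · exact Or.inl (by omega)
        · have : v2 * (-u1) = 1 := by linarith
          rcases Int.eq_one_or_neg_one_of_mul_eq_one' this with ⟨h1, _⟩ | ⟨h1, _⟩
          · exact Or.inl h1
          · exact Or.inr h1
      rcases hu with h1 | h1 <;> rcases hv with h2 | h2 <;> subst h1 h2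
      · exact reach_of_eq (reach_u_add (reach_base a b c d) m)
          (by ring) (by omega) rfl rfl
      · exact reach_of_eq (reach_u_add (reach_s3 (reach_base a b c d)) (-m))
          (by ring) (by omega) (by ring) rfl
      · exact reach_of_eq (reach_u_add (reach_nu (reach_base a b c d)) m)
          (by ring) (by omega) rfl rfl
      · exact reach_of_eq (reach_u_add (reach_nu (reach_s3 (reach_base a b c d))) (-m))
          (by ring) (by omega) (by ring) rfl
    · -- v1 ≠ 0
      have hu0 : u1 ≠ 0 := by
        rintro rfl
        exact (Int.not_odd_iff_even.mpr Even.zero) hu1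
      have hne : u1.natAbs ≠ v1.natAbs := by
        have h1 : Odd u1.natAbs := Int.natAbs_odd.mpr hu1
        have h2 : Even v1.natAbs := Int.natAbs_even.mpr hv1
        obtain ⟨s, hs⟩ := h1; obtain ⟨t, ht⟩ := h2
        omega
      rcases Nat.lt_or_ge u1.natAbs v1.natAbs with hlt | hge
      · -- reduce v1 mod 2*u1
        obtain ⟨k, hk⟩ := exists_reduce v1 u1 hu0
        have hrec : Reach a b c d u1 u2 (v1 + 2*k*u1) (v2 + 2*k*u2) := by
          apply ih (u1.natAbs + (v1 + 2*k*u1).natAbs) (by omega) u1 u2 _ _ le_rfl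
          · rcases hdet with h | h
            · exact Or.inl (by linear_combination h)
            · exact Or.inr (by linear_combination h)
          · exact hu1
          · exact hu2
          · obtain ⟨s, hs⟩ := hv1; obtain ⟨t, ht⟩ := hu1
            exact ⟨s + k*(2*t+1), by rw [hs, ht]; ring⟩
        exact reach_of_eq (reach_v_add hrec (-k)) rfl rfl (by ring) (by ring)
      · -- u1.natAbs > v1.natAbs : reduce u1 mod 2*v1
        have hgt : v1.natAbs < u1.natAbs := by omega
        obtain ⟨k, hk⟩ := exists_reduce u1 v1 hv0
        have hstrict : (u1 + 2*k*v1).natAbs < u1.natAbs := by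
          have hodd : Odd (u1 + 2*k*v1) := by
            obtain ⟨t, ht⟩ := hu1
            exact ⟨t + k*v1, by rw [ht]; ring⟩
          have h1 : Odd (u1 + 2*k*v1).natAbs := Int.natAbs_odd.mpr hodd
          have h2 : Even v1.natAbs := Int.natAbs_even.mpr hv1
          obtain ⟨s, hs⟩ := h1; obtain ⟨t, ht⟩ := h2
          omega
        have hrec : Reach a b c d (u1 + 2*k*v1) (u2 + 2*k*v2) v1 v2 := by
          apply ih ((u1 + 2*k*v1).natAbs + v1.natAbs) (by omega) _ _ v1 v2 le_rfl
          · rcases hdet with h | h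
            · exact Or.inl (by linear_combination h)
            · exact Or.inr (by linear_combination h)
          · obtain ⟨t, ht⟩ := hu1
            exact ⟨t + k*v1, by rw [ht]; ring⟩
          · obtain ⟨t, ht⟩ := hu2
            exact ⟨t + k*v2, by rw [ht]; ring⟩
          · exact hv1
        exact reach_of_eq (reach_u_add hrec (-k)) (by ring) (by ring) rfl rfl

lemma reach_all (a b c d u1 u2 v1 v2 : ℤ)
    (hdet : u1 * v2 - u2 * v1 = 1 ∨ u1 * v2 - u2 * v1 = -1)
    (hu1 : Odd u1) (hu2 : Even u2) (hv1 : Even v1) :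
    Reach a b c d u1 u2 v1 v2 :=
  reach_all_aux a b c d (u1.natAbs + v1.natAbs) u1 u2 v1 v2 le_rfl hdet hu1 hu2 hv1



lemma reach_to_goal {a b c d x y u1 u2 v1 v2 : ℤ} (h : Reach a b c d u1 u2 v1 v2)
    (hcase : (x = u1 ∧ y = u2) ∨ (x = v1 ∧ y = v2) ∨ (x = u1 + v1 ∧ y = u2 + v2)) :
    ∃ M ∈ apolloA1,
      (M.mulVec ![a, b, c, d]) 0 = a ∧
      ∃ i : Fin 4, i ≠ 0 ∧
        (M.mulVec ![a, b, c, d]) i =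
          ((a + b) * x ^ 2 + (a + b + d - c) * x * y + (a + d) * y ^ 2) - a := by
  obtain ⟨M, hM, hv⟩ := h
  refine ⟨M, hM, by rw [hv]; simp, ?_⟩
  rcases hcase with ⟨hx, hy⟩ | ⟨hx, hy⟩ | ⟨hx, hy⟩
  · exact ⟨1, by decide, by rw [hv, hx, hy]; simp [g]⟩
  · exact ⟨3, by decide, by rw [hv, hx, hy]; simp [g]⟩
  · exact ⟨2, by decide, by rw [hv, hx, hy]; simp [g]⟩

theorem reach_to_goal_final
    (a b c d : ℤ)
    (x y : ℤ) (hxy : IsCoprime x y) :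
    ∃ M ∈ apolloA1,
      (M.mulVec ![a, b, c, d]) 0 = a ∧
      ∃ i : Fin 4, i ≠ 0 ∧
        (M.mulVec ![a, b, c, d]) i =
          ((a + b) * x ^ 2 + (a + b + d - c) * x * y + (a + d) * y ^ 2) - a := by
  obtain ⟨p, q, hpq⟩ := hxy
  rcases Int.even_or_odd x with hx | hx <;> rcases Int.even_or_odd y with hy | hy
  · -- both even: impossible
    exfalso
    have h1 : Even (p * x) := hx.mul_left p
    have h2 : Even (q * y) := hy.mul_left q
    have h3 : Even (p * x + q * y) := h1.add h2
    rw [hpq] at h3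
    exact (Int.not_odd_iff_even.mpr h3) odd_one
  · -- x even, y odd : (x,y) is the v-vector
    have hq : Odd q := by
      by_contra hq
      have hq' : Even q := Int.not_odd_iff_even.mp hq
      have h1 : Even (p * x) := hx.mul_left p
      have h2 : Even (q * y) := hq'.mul_right y
      have h3 : Even (p * x + q * y) := h1.add h2
      rw [hpq] at h3
      exact (Int.not_odd_iff_even.mpr h3) odd_one
    by_cases hp : Even p
    · have h := reach_all a b c d q (-p) x y
        (Or.inl (by linear_combination hpq)) hq hp.neg hx
      exact reach_to_goal h (Or.inr (Or.inl ⟨rfl, rfl⟩))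
    · have hp' : Odd p := Int.not_even_iff_odd.mp hp
      have h := reach_all a b c d (q + x) (y - p) x y
        (Or.inl (by linear_combination hpq)) (by
          obtain ⟨s, hs⟩ := hq; obtain ⟨t, ht⟩ := hx
          exact ⟨s + t, by omega⟩) (hy.sub_odd hp') hx
      exact reach_to_goal h (Or.inr (Or.inl ⟨rfl, rfl⟩))
  · -- x odd, y even : (x,y) is the u-vector
    by_cases hq : Even q
    · have h := reach_all a b c d x y (-q) p
        (Or.inl (by linear_combination hpq)) hx hy hq.neg
      exact reach_to_goal h (Or.inl ⟨rfl, rfl⟩)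
    · have hq' : Odd q := Int.not_even_iff_odd.mp hq
      have h := reach_all a b c d x y (x - q) (p + y)
        (Or.inl (by linear_combination hpq)) hx hy (hx.sub_odd hq')
      exact reach_to_goal h (Or.inl ⟨rfl, rfl⟩)
  · -- both odd : (x,y) = u + v
    by_cases hq : Odd q
    · have hp : Even p := by
        by_contra hp
        have hp' : Odd p := Int.not_even_iff_odd.mp hp
        have h3 : Even (p * x + q * y) := (hp'.mul hx).add_odd (hq.mul hy)
        rw [hpq] at h3
        exact (Int.not_odd_iff_even.mpr h3) odd_one
      have h := reach_all a b c d q (-p) (x - q) (y + p)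
        (Or.inl (by linear_combination hpq)) hq hp.neg (hx.sub_odd hq)
      exact reach_to_goal h (Or.inr (Or.inr ⟨by ring, by ring⟩))
    · have hq' : Even q := Int.not_odd_iff_even.mp hq
      have hp : Odd p := by
        by_contra hp
        have hp' : Even p := Int.not_odd_iff_even.mp hp
        have h3 : Even (p * x + q * y) := (hp'.mul_right x).add (hq'.mul_right y)
        rw [hpq] at h3
        exact (Int.not_odd_iff_even.mpr h3) odd_one
      have h := reach_all a b c d (q + x) (y - p) (-q) p
        (Or.inl (by linear_combination hpq)) (by
          obtain ⟨s, hs⟩ := hq'; obtain ⟨t, ht⟩ := hx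
          exact ⟨s + t, by omega⟩) (hy.sub_odd hp) hq'.neg
      exact reach_to_goal h (Or.inr (Or.inr ⟨by ring, by ring⟩))

end ApolloAux

/-- Every integer of the form `f_a(x,y) - a` with `gcd(x,y) = 1`, where
`f_a(x,y) = (a+b)x² + (a+b+d-c)xy + (a+d)y²`, occurs as a coordinate of some
vector in the orbit `A₁·(a,b,c,d)ᵀ`, whose first coordinate is `a`. -/
theorem shifted_form_values_occur_in_A1_orbit
    (a b c d : ℤ) (hQ : descartesQ a b c d = 0)
    (x y : ℤ) (hxy : IsCoprime x y) :
    ∃ M ∈ apolloA1,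
      (M.mulVec ![a, b, c, d]) 0 = a ∧
      ∃ i : Fin 4, i ≠ 0 ∧
        (M.mulVec ![a, b, c, d]) i =
          ((a + b) * x ^ 2 + (a + b + d - c) * x * y + (a + d) * y ^ 2) - a := by
  exact ApolloAux.reach_to_goal_final a b c d x y hxy
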